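/- Let h be continuous and u a nontrivial twice-differentiable solution of u'' + h·u = 0 on ℝ. Define Y(x,Φ) = Φ/(Φ²u(x)² + u'(x)²) on {(x,Φ) : Φ > 0}. Then Y satisfies the partial differential equation (Φ/(h(x) − Φ²) · ∂ₓY)² + (Φ·∂_Φ Y)² = Y² at every point with Φ² ≠ h(x). -/

import Mathlib

theorem stmt_16 (h u : ℝ → ℝ) (hh : Continuous h)
    (hu : ∀ x : ℝ, DifferentiableAt ℝ u x)
    (hu' : ∀ x : ℝ, DifferentiableAt ℝ (deriv u) x)
    (hode : ∀ x : ℝ, deriv (deriv u) x + h x * u x = 0)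
    (hnt : ∀ x : ℝ, u x ≠ 0 ∨ deriv u x ≠ 0) :
    let Y : ℝ → ℝ → ℝ := fun x Φ => Φ / (Φ ^ 2 * (u x) ^ 2 + (deriv u x) ^ 2)
    ∀ x Φ : ℝ, 0 < Φ → Φ ^ 2 ≠ h x →
      (Φ / (h x - Φ ^ 2) * deriv (fun t => Y t Φ) x) ^ 2
        + (Φ * deriv (fun s => Y x s) Φ) ^ 2 = (Y x Φ) ^ 2 := by
  intro Y x Φ hΦ hne
  have hD : ∀ t : ℝ, (u t ≠ 0 ∨ deriv u t ≠ 0) →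
      Φ ^ 2 * (u t) ^ 2 + (deriv u t) ^ 2 > 0 := by
    intro t ht
    rcases ht with ht | ht
    · have : Φ ^ 2 * (u t) ^ 2 > 0 := by positivity
      nlinarith [sq_nonneg (deriv u t)]
    · have : (deriv u t) ^ 2 > 0 := by positivity
      nlinarith [sq_nonneg (Φ * u t)]
  have hDx : (Φ ^ 2 * (u x) ^ 2 + (deriv u x) ^ 2) ≠ 0 := (hD x (hnt x)).ne'
  -- second derivative value
  have hu'' : deriv (deriv u) x = -(h x * u x) := by
    have := hode x; linarith
  -- derivative in x of the denominator
  have hden : HasDerivAt (fun t => Φ ^ 2 * (u t) ^ 2 + (deriv u t) ^ 2)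
      (Φ ^ 2 * (2 * u x ^ 1 * deriv u x) + 2 * (deriv u x) ^ 1 * deriv (deriv u) x) x := by
    exact ((((hu x).hasDerivAt).pow 2).const_mul (Φ^2)).add (((hu' x).hasDerivAt).pow 2)
  -- derivative in x of Y
  have hYx : HasDerivAt (fun t => Y t Φ)
      ((0 * (Φ ^ 2 * (u x) ^ 2 + (deriv u x) ^ 2)
        - Φ * (Φ ^ 2 * (2 * u x ^ 1 * deriv u x) + 2 * (deriv u x) ^ 1 * deriv (deriv u) x))
        / (Φ ^ 2 * (u x) ^ 2 + (deriv u x) ^ 2) ^ 2) x :=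
    (hasDerivAt_const x Φ).div hden hDx
  -- derivative in Φ of Y
  have hYΦ : HasDerivAt (fun s => Y x s)
      ((1 * (Φ ^ 2 * (u x) ^ 2 + (deriv u x) ^ 2)
        - Φ * (2 * Φ * (u x) ^ 2))
        / (Φ ^ 2 * (u x) ^ 2 + (deriv u x) ^ 2) ^ 2) Φ := by
    have := (hasDerivAt_id Φ).div
      ((((hasDerivAt_id Φ).pow 2).mul_const ((u x) ^ 2)).add_const ((deriv u x) ^ 2)) hDx
    simp only [id_eq, Pi.div_def, Pi.pow_apply] at this
    refine this.congr_deriv ?_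
    push_cast; ring
  rw [hYx.deriv, hYΦ.deriv, hu'']
  have hne' : h x - Φ ^ 2 ≠ 0 := fun hc => hne (by linarith)
  simp only [Y]
  field_simp
  ring
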